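/- Let p ≥ 2 and n ≥ 1 be integers, and let A_1, …, A_p be symmetric real n×n matrices. Set S_{αβ} = tr(A_α A_β), S_α = S_{αα} = ‖A_α‖², and S = S_1 + … + S_p. Then Σ_{α,β=1}^p ‖A_α A_β − A_β A_α‖² + Σ_{α,β=1}^p S_{αβ}² ≤ (3/2)·S². -/

import Mathlib

open Matrix BigOperators Finset

namespace LiLiAux

/-- Frobenius inner product as a plain double sum. -/
def ip {m : Type*} [Fintype m] (X Y : Matrix m m ℝ) : ℝ := ∑ i, ∑ j, X i j * Y i j

lemma ip_comm {m : Type*} [Fintype m] (X Y : Matrix m m ℝ) : ip X Y = ip Y X := by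
  unfold ip; congr 1; ext i; congr 1; ext j; ring

lemma ip_self_nonneg {m : Type*} [Fintype m] (X : Matrix m m ℝ) : 0 ≤ ip X X := by
  unfold ip
  exact Finset.sum_nonneg fun i _ => Finset.sum_nonneg fun j _ => mul_self_nonneg _

lemma ip_self_eq_zero {m : Type*} [Fintype m] {X : Matrix m m ℝ} (h : ip X X = 0) : X = 0 := by
  ext i j
  have h1 : ∀ i ∈ (univ : Finset m), (0:ℝ) ≤ ∑ j, X i j * X i j :=
    fun i _ => Finset.sum_nonneg fun j _ => mul_self_nonneg _
  have h2 := (Finset.sum_eq_zero_iff_of_nonneg h1).mp h i (mem_univ i)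
  have h3 : ∀ j ∈ (univ : Finset m), (0:ℝ) ≤ X i j * X i j := fun j _ => mul_self_nonneg _
  have h4 := (Finset.sum_eq_zero_iff_of_nonneg h3).mp h2 j (mem_univ j)
  have := mul_self_eq_zero.mp h4
  simpa using this

lemma ip_eq_trace {m : Type*} [Fintype m] (X Y : Matrix m m ℝ) :
    ip X Y = Matrix.trace (X * Yᵀ) := by
  unfold ip
  rw [Matrix.trace]
  simp only [Matrix.diag_apply, Matrix.mul_apply, Matrix.transpose_apply]

lemma trace_mul_symm {m : Type*} [Fintype m] (X Y : Matrix m m ℝ) (hY : Y.IsSymm) :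
    Matrix.trace (X * Y) = ip X Y := by
  rw [ip_eq_trace]
  rw [hY]


lemma key_cs (a b x y : ℝ) (ha : 0 < a) (hb : 0 < b) :
    (x - y)^2 ≤ (a + b) * (x^2/a + y^2/b) := by
  rw [div_add_div _ _ ha.ne' hb.ne', ← sub_nonneg]
  have h1 : (a + b) * ((x^2*b + a*y^2)/(a*b)) - (x-y)^2 = (b*x + a*y)^2 / (a*b) := by
    field_simp; ring
  rw [h1]; positivity

/-- Weighted graph (Anderson–Morley style) bound. -/
lemma graph_bound {N : ℕ} (μ : Fin N → ℝ) (c : Fin N → Fin N → ℝ)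
    (hsym : ∀ s t, c s t = c t s) (h0 : ∀ s t, 0 ≤ c s t)
    (hdiag : ∀ s, c s s = 0) (hcap : ∀ s t, s ≠ t → c s t ≤ 1/2) :
    ∑ s, ∑ t, c s t * (μ s - μ t)^2 ≤ ((∑ s, ∑ t, c s t) + 1) * ∑ s, μ s ^2 := by
  classical
  set d : Fin N → ℝ := fun s => ∑ t, 2 * c s t with hd
  set m : ℝ := ∑ s, ∑ t, c s t with hm
  have hm0 : 0 ≤ m := Finset.sum_nonneg fun s _ => Finset.sum_nonneg fun t _ => h0 s t
  have hd0 : ∀ s, 0 ≤ d s :=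
    fun s => Finset.sum_nonneg fun t _ => mul_nonneg (by norm_num) (h0 s t)
  have htwo : ∀ s, ∑ t, 2 * c s t = 2 * ∑ t, c s t := fun s => (Finset.mul_sum _ _ _).symm
  have hrow : ∀ s, ∑ t, c s t = d s / 2 := by
    intro s
    rw [hd]; simp only [htwo s]; ring
  have hcd : ∀ s t, 2 * c s t ≤ d s := by
    intro s t
    rw [hd]
    simp only
    exact Finset.single_le_sum (f := fun u => 2 * c s u)
      (fun u _ => mul_nonneg (by norm_num) (h0 s u)) (mem_univ t)
  -- edge bound : d s + d t ≤ m + 2 c s t  for s ≠ t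
  have hedge : ∀ s t, s ≠ t → d s + d t ≤ m + 2 * c s t := by
    intro s t hst
    have hpair : ({s, t} : Finset (Fin N)).Nonempty := ⟨s, by simp⟩
    -- m = ∑_{u∈{s,t}} row u + ∑_{u∉{s,t}} row u
    have hsplitm : ∑ u ∈ ({s, t} : Finset (Fin N)), (∑ v, c u v)
        + ∑ u ∈ ({s, t} : Finset (Fin N))ᶜ, (∑ v, c u v) = m := by
      rw [hm, Finset.sum_add_sum_compl]
    have hpairsum : ∑ u ∈ ({s, t} : Finset (Fin N)), (∑ v, c u v)
        = (∑ v, c s v) + (∑ v, c t v) := Finset.sum_pair hst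
    -- for each u, row u ≥ c u s + c u t
    have hrowge : ∀ u, c u s + c u t ≤ ∑ v, c u v := by
      intro u
      have : ∑ v ∈ ({s, t} : Finset (Fin N)), c u v = c u s + c u t := Finset.sum_pair hst
      rw [← this]
      exact Finset.sum_le_sum_of_subset_of_nonneg (Finset.subset_univ _)
        (fun v _ _ => h0 u v)
    have hcompl : ∑ u ∈ ({s, t} : Finset (Fin N))ᶜ, (c u s + c u t)
        = (∑ u, (c u s + c u t)) - ((c s s + c s t) + (c t s + c t t)) := by
      have h5 : ∑ u ∈ ({s, t} : Finset (Fin N)), (c u s + c u t)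
          = (c s s + c s t) + (c t s + c t t) := Finset.sum_pair hst
      have h6 := Finset.sum_add_sum_compl ({s, t} : Finset (Fin N)) (fun u => c u s + c u t)
      linarith [h6, h5.symm]
    have hcols : (∑ u, (c u s + c u t)) = d s / 2 + d t / 2 := by
      rw [Finset.sum_add_distrib]
      have e1 : ∑ u, c u s = ∑ u, c s u := Finset.sum_congr rfl fun u _ => (hsym u s).trans rfl
      have e2 : ∑ u, c u t = ∑ u, c t u := Finset.sum_congr rfl fun u _ => (hsym u t).trans rfl
      rw [e1, e2, hrow s, hrow t]
    have hlow : ∑ u ∈ ({s, t} : Finset (Fin N))ᶜ, (c u s + c u t)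
        ≤ ∑ u ∈ ({s, t} : Finset (Fin N))ᶜ, (∑ v, c u v) :=
      Finset.sum_le_sum fun u _ => hrowge u
    have hss := hdiag s; have htt := hdiag t
    have hts : c t s = c s t := hsym t s
    have h7 : d s / 2 + d t / 2 - 2 * c s t ≤ ∑ u ∈ ({s, t} : Finset (Fin N))ᶜ, (∑ v, c u v) := by
      rw [← hcols] at *
      linarith [hcompl, hlow]
    have h8 : (∑ v, c s v) + (∑ v, c t v) = d s / 2 + d t / 2 := by rw [hrow s, hrow t]
    linarith [hsplitm, hpairsum, h7, h8]
  -- pointwise bound off the diagonal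
  have hpoint : ∀ s t, s ≠ t →
      c s t * (μ s - μ t)^2 ≤ (m + 1) * (c s t * (μ s ^2 / d s) + c s t * (μ t ^2 / d t)) := by
    intro s t hst
    rcases eq_or_lt_of_le (h0 s t) with hc0 | hcpos
    · rw [← hc0]; simp
    · have hds : 0 < d s := lt_of_lt_of_le (by linarith) (hcd s t)
      have hdt : 0 < d t := by
        have := hcd t s
        rw [hsym t s] at this
        exact lt_of_lt_of_le (by linarith) this
      have h1 := key_cs (d s) (d t) (μ s) (μ t) hds hdt
      have h2 : d s + d t ≤ m + 1 := by
        have := hedge s t hst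
        have := hcap s t hst
        linarith
      have h3 : (0:ℝ) ≤ μ s ^2 / d s + μ t ^2 / d t := by positivity
      calc c s t * (μ s - μ t)^2
          ≤ c s t * ((d s + d t) * (μ s ^2 / d s + μ t ^2 / d t)) :=
            mul_le_mul_of_nonneg_left h1 (le_of_lt hcpos)
        _ ≤ c s t * ((m + 1) * (μ s ^2 / d s + μ t ^2 / d t)) := by
            apply mul_le_mul_of_nonneg_left _ (le_of_lt hcpos)
            exact mul_le_mul_of_nonneg_right h2 h3
        _ = (m + 1) * (c s t * (μ s ^2 / d s) + c s t * (μ t ^2 / d t)) := by ring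
  -- sum it all
  have hsum1 : ∑ s, ∑ t, c s t * (μ s ^2 / d s) ≤ (∑ s, μ s ^2) / 2 := by
    have e1 : ∀ s, ∑ t, c s t * (μ s ^2 / d s) = (d s / 2) * (μ s ^2 / d s) := by
      intro s
      rw [← Finset.sum_mul, hrow s]
    rw [Finset.sum_congr rfl fun s _ => e1 s]
    have e2 : ∀ s, (d s / 2) * (μ s ^2 / d s) ≤ μ s ^2 / 2 := by
      intro s
      rcases eq_or_lt_of_le (hd0 s) with h | h
      · rw [← h]; simp; positivity
      · have heq : (d s / 2) * (μ s ^2 / d s) = μ s ^2 / 2 := by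
          field_simp
        rw [heq]
    calc ∑ s, (d s / 2) * (μ s ^2 / d s) ≤ ∑ s, μ s ^2 / 2 := Finset.sum_le_sum fun s _ => e2 s
      _ = (∑ s, μ s ^2) / 2 := (Finset.sum_div _ _ _).symm
  have hsum2 : ∑ s, ∑ t, c s t * (μ t ^2 / d t) ≤ (∑ s, μ s ^2) / 2 := by
    rw [Finset.sum_comm]
    have e1 : ∀ t, ∑ s, c s t * (μ t ^2 / d t) = (d t / 2) * (μ t ^2 / d t) := by
      intro t
      rw [← Finset.sum_mul]
      have : ∑ s, c s t = ∑ s, c t s := Finset.sum_congr rfl fun s _ => hsym s t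
      rw [this, hrow t]
    rw [Finset.sum_congr rfl fun t _ => e1 t]
    have e2 : ∀ s, (d s / 2) * (μ s ^2 / d s) ≤ μ s ^2 / 2 := by
      intro s
      rcases eq_or_lt_of_le (hd0 s) with h | h
      · rw [← h]; simp; positivity
      · have heq : (d s / 2) * (μ s ^2 / d s) = μ s ^2 / 2 := by
          field_simp
        rw [heq]
    calc ∑ s, (d s / 2) * (μ s ^2 / d s) ≤ ∑ s, μ s ^2 / 2 := Finset.sum_le_sum fun s _ => e2 s
      _ = (∑ s, μ s ^2) / 2 := (Finset.sum_div _ _ _).symm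
  have hpoint' : ∀ s t,
      c s t * (μ s - μ t)^2 ≤ (m + 1) * (c s t * (μ s ^2 / d s) + c s t * (μ t ^2 / d t)) := by
    intro s t
    by_cases hst : s = t
    · subst hst
      have : c s s * (μ s - μ s)^2 = 0 := by simp
      rw [this]
      have : (0:ℝ) ≤ c s s * (μ s ^2 / d s) + c s s * (μ s ^2 / d s) := by
        have := h0 s s; have := hd0 s; positivity
      nlinarith [hm0]
    · exact hpoint s t hst
  calc ∑ s, ∑ t, c s t * (μ s - μ t)^2
      ≤ ∑ s, ∑ t, (m + 1) * (c s t * (μ s ^2 / d s) + c s t * (μ t ^2 / d t)) :=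
        Finset.sum_le_sum fun s _ => Finset.sum_le_sum fun t _ => hpoint' s t
    _ = (m + 1) * ((∑ s, ∑ t, c s t * (μ s ^2 / d s)) + ∑ s, ∑ t, c s t * (μ t ^2 / d t)) := by
        simp only [mul_add, Finset.mul_sum, Finset.sum_add_distrib]
    _ ≤ (m + 1) * ((∑ s, μ s ^2) / 2 + (∑ s, μ s ^2) / 2) := by
        apply mul_le_mul_of_nonneg_left _ (by linarith : (0:ℝ) ≤ m + 1)
        exact add_le_add hsum1 hsum2
    _ = (m + 1) * ∑ s, μ s ^2 := by ring

/-- Bessel-type inequality for a pairwise-orthogonal family. -/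
lemma bessel {ι κ : Type*} [Fintype κ] (s : Finset ι) (v : ι → κ → ℝ) (e : κ → ℝ)
    (horth : ∀ i ∈ s, ∀ j ∈ s, i ≠ j → ∑ x, v i x * v j x = 0)
    (c : ℝ) (hc0 : 0 ≤ c) (hc : ∀ i ∈ s, ∑ x, v i x * v i x ≤ c) :
    ∑ i ∈ s, (∑ x, v i x * e x) ^ 2 ≤ c * ∑ x, e x * e x := by
  classical
  set b : ι → ℝ := fun i => ∑ x, v i x * v i x with hb
  have hbnn : ∀ i, 0 ≤ b i := fun i => Finset.sum_nonneg fun x _ => mul_self_nonneg _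
  have hbzero : ∀ i, b i = 0 → ∀ x, v i x = 0 := by
    intro i hbi x
    have h1 : ∀ x ∈ (univ : Finset κ), (0:ℝ) ≤ v i x * v i x := fun x _ => mul_self_nonneg _
    exact mul_self_eq_zero.mp ((Finset.sum_eq_zero_iff_of_nonneg h1).mp hbi x (mem_univ x))
  set w : ι → ℝ := fun i => (∑ x, v i x * e x) / b i with hw
  set t : ι → ℝ := fun i => (∑ x, v i x * e x) ^ 2 / b i with ht
  have htnn : ∀ i, 0 ≤ t i := fun i => div_nonneg (sq_nonneg _) (hbnn i)
  -- main Bessel bound: ∑ t ≤ ⟨e,e⟩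
  have hmain : ∑ i ∈ s, t i ≤ ∑ x, e x * e x := by
    have hexp : (0:ℝ) ≤ ∑ x, (e x - ∑ i ∈ s, w i * v i x) * (e x - ∑ i ∈ s, w i * v i x) :=
      Finset.sum_nonneg fun x _ => mul_self_nonneg _
    have pA : ∑ x, (∑ i ∈ s, w i * v i x) * e x = ∑ i ∈ s, w i * (∑ x, v i x * e x) := by
      have e0 : ∀ x : κ, (∑ i ∈ s, w i * v i x) * e x = ∑ i ∈ s, w i * (v i x * e x) := by
        intro x; rw [Finset.sum_mul]; apply Finset.sum_congr rfl; intros; ring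
      rw [Finset.sum_congr rfl fun x _ => e0 x, Finset.sum_comm]
      apply Finset.sum_congr rfl; intro i _; rw [Finset.mul_sum]
    have pB : ∑ x, (∑ i ∈ s, w i * v i x) * (∑ j ∈ s, w j * v j x)
        = ∑ i ∈ s, w i * w i * b i := by
      have e1 : ∀ x : κ, (∑ i ∈ s, w i * v i x) * (∑ j ∈ s, w j * v j x)
          = ∑ i ∈ s, ∑ j ∈ s, w i * w j * (v i x * v j x) := by
        intro x
        rw [Finset.sum_mul_sum]
        apply Finset.sum_congr rfl; intro i _
        apply Finset.sum_congr rfl; intros; ring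
      rw [Finset.sum_congr rfl fun x _ => e1 x, Finset.sum_comm]
      apply Finset.sum_congr rfl
      intro i hi
      rw [Finset.sum_comm]
      have e2 : ∀ j ∈ s, ∑ x, w i * w j * (v i x * v j x) = w i * w j * ∑ x, v i x * v j x :=
        fun j _ => (Finset.mul_sum _ _ _).symm
      rw [Finset.sum_congr rfl e2,
        Finset.sum_eq_single_of_mem i hi
          (fun j hj hji => by rw [horth i hi j hj (Ne.symm hji), mul_zero])]
    have hsplit : ∀ x : κ, (e x - ∑ i ∈ s, w i * v i x) * (e x - ∑ i ∈ s, w i * v i x)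
        = e x * e x - 2 * ((∑ i ∈ s, w i * v i x) * e x)
          + (∑ i ∈ s, w i * v i x) * (∑ j ∈ s, w j * v j x) := by
      intro x; ring
    have hexpand : ∑ x, (e x - ∑ i ∈ s, w i * v i x) * (e x - ∑ i ∈ s, w i * v i x)
        = (∑ x, e x * e x) - 2 * ∑ i ∈ s, w i * (∑ x, v i x * e x)
          + ∑ i ∈ s, w i * w i * b i := by
      rw [Finset.sum_congr rfl fun x _ => hsplit x, Finset.sum_add_distrib,
        Finset.sum_sub_distrib, pB, ← pA, Finset.mul_sum]
    rw [hexpand] at hexp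
    -- identify the two middle sums with t
    have hwt : ∀ i ∈ s, w i * (∑ x, v i x * e x) = t i := by
      intro i _
      by_cases hbi : b i = 0
      · have : ∑ x, v i x * e x = 0 :=
          Finset.sum_eq_zero fun x _ => by rw [hbzero i hbi x, zero_mul]
        simp [hw, ht, this]
      · field_simp [hw, ht]
        ring
    have hwwb : ∀ i ∈ s, w i * w i * b i = t i := by
      intro i _
      by_cases hbi : b i = 0
      · simp [hw, ht, hbi]
      · field_simp [hw, ht]
        simp only [hw, ht]
        field_simp
    rw [Finset.sum_congr rfl hwt, Finset.sum_congr rfl hwwb] at hexp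
    linarith
  -- conclude
  have hterm : ∀ i ∈ s, (∑ x, v i x * e x) ^ 2 ≤ c * t i := by
    intro i hi
    by_cases hbi : b i = 0
    · have : ∑ x, v i x * e x = 0 :=
        Finset.sum_eq_zero fun x _ => by rw [hbzero i hbi x, zero_mul]
      rw [this]
      simpa using mul_nonneg hc0 (htnn i)
    · have : (∑ x, v i x * e x) ^ 2 = t i * b i := by
        simp only [ht]
        field_simp
      rw [this]
      calc t i * b i ≤ t i * c := by
            apply mul_le_mul_of_nonneg_left (hc i hi) (htnn i)
        _ = c * t i := mul_comm _ _
  calc ∑ i ∈ s, (∑ x, v i x * e x) ^ 2 ≤ ∑ i ∈ s, c * t i := Finset.sum_le_sum hterm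
    _ = c * ∑ i ∈ s, t i := by rw [Finset.mul_sum]
    _ ≤ c * ∑ x, e x * e x := mul_le_mul_of_nonneg_left hmain hc0


lemma ip_conj {m : Type*} [Fintype m] [DecidableEq m] (Q X Y : Matrix m m ℝ)
    (h : Qᵀ * Q = 1) :
    ip (Q * X * Qᵀ) (Q * Y * Qᵀ) = ip X Y := by
  rw [ip_eq_trace, ip_eq_trace]
  have e0 : (Q * Y * Qᵀ)ᵀ = Q * Yᵀ * Qᵀ := by
    simp [Matrix.transpose_mul, Matrix.mul_assoc]
  rw [e0]
  have e1 : Q * X * Qᵀ * (Q * Yᵀ * Qᵀ) = Q * (X * Yᵀ) * Qᵀ := by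
    calc Q * X * Qᵀ * (Q * Yᵀ * Qᵀ) = Q * X * (Qᵀ * Q) * Yᵀ * Qᵀ := by
          simp only [Matrix.mul_assoc]
      _ = Q * (X * Yᵀ) * Qᵀ := by rw [h]; simp only [Matrix.mul_one, Matrix.mul_assoc]
  rw [e1, Matrix.trace_mul_comm, ← Matrix.mul_assoc, Matrix.mul_assoc Qᵀ, ← Matrix.mul_assoc Qᵀ, h,
    Matrix.one_mul]


/-- conjugation distributes over products and commutators -/
lemma conj_mul {m : Type*} [Fintype m] [DecidableEq m] (Q X Y : Matrix m m ℝ)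
    (h : Qᵀ * Q = 1) :
    Q * (X * Y) * Qᵀ = (Q * X * Qᵀ) * (Q * Y * Qᵀ) := by
  calc Q * (X * Y) * Qᵀ = Q * X * (Qᵀ * Q) * Y * Qᵀ := by
        rw [h]; simp only [Matrix.mul_one, Matrix.mul_assoc]
    _ = (Q * X * Qᵀ) * (Q * Y * Qᵀ) := by simp only [Matrix.mul_assoc]

lemma conj_comm_sub {m : Type*} [Fintype m] [DecidableEq m] (Q X Y : Matrix m m ℝ)
    (h : Qᵀ * Q = 1) :
    Q * (X * Y - Y * X) * Qᵀ
      = (Q * X * Qᵀ) * (Q * Y * Qᵀ) - (Q * Y * Qᵀ) * (Q * X * Qᵀ) := by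
  rw [mul_sub Q, sub_mul, conj_mul Q X Y h, conj_mul Q Y X h]

lemma ip_diag_comm {n : ℕ} (μ : Fin n → ℝ) (X : Matrix (Fin n) (Fin n) ℝ) :
    ip (Matrix.diagonal μ * X - X * Matrix.diagonal μ)
       (Matrix.diagonal μ * X - X * Matrix.diagonal μ)
      = ∑ s, ∑ t, (μ s - μ t)^2 * (X s t)^2 := by
  unfold ip
  apply Finset.sum_congr rfl; intro s _
  apply Finset.sum_congr rfl; intro t _
  rw [Matrix.sub_apply, Matrix.diagonal_mul, Matrix.mul_diagonal]
  ring

lemma ip_diag_self {n : ℕ} (μ : Fin n → ℝ) :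
    ip (Matrix.diagonal μ) (Matrix.diagonal μ) = ∑ s, μ s ^2 := by
  unfold ip
  apply Finset.sum_congr rfl; intro s _
  rw [Finset.sum_eq_single_of_mem s (mem_univ s)]
  · simp [Matrix.diagonal_apply_eq]; ring
  · intro t _ hts
    rw [Matrix.diagonal_apply_ne μ (Ne.symm hts)]
    ring


lemma sum4_swap {a b g d : Type*} [Fintype a] [Fintype b] [Fintype g] [Fintype d]
    (f : a → b → g → d → ℝ) :
    ∑ x, ∑ y, ∑ z, ∑ w, f x y z w = ∑ z, ∑ w, ∑ x, ∑ y, f x y z w := by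
  calc ∑ x, ∑ y, ∑ z, ∑ w, f x y z w
      = ∑ x, ∑ z, ∑ y, ∑ w, f x y z w :=
        Finset.sum_congr rfl fun x _ => Finset.sum_comm
    _ = ∑ z, ∑ x, ∑ y, ∑ w, f x y z w := Finset.sum_comm
    _ = ∑ z, ∑ x, ∑ w, ∑ y, f x y z w :=
        Finset.sum_congr rfl fun z _ => Finset.sum_congr rfl fun x _ => Finset.sum_comm
    _ = ∑ z, ∑ w, ∑ x, ∑ y, f x y z w :=
        Finset.sum_congr rfl fun z _ => Finset.sum_comm

lemma matrix_sum_smul_apply {m κ : Type*} [Fintype m] [Fintype κ]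
    (x : κ → ℝ) (M : κ → Matrix m m ℝ) (i j : m) :
    (∑ k, x k • M k) i j = ∑ k, x k * M k i j := by
  rw [Matrix.sum_apply]
  apply Finset.sum_congr rfl; intro k _
  rw [Matrix.smul_apply, smul_eq_mul]

lemma ip_sum_smul {m κ κ' : Type*} [Fintype m] [Fintype κ] [Fintype κ']
    (x : κ → ℝ) (y : κ' → ℝ) (M : κ → Matrix m m ℝ) (N : κ' → Matrix m m ℝ) :
    ip (∑ k, x k • M k) (∑ l, y l • N l) = ∑ k, ∑ l, x k * y l * ip (M k) (N l) := by
  unfold ip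
  have e1 : ∀ i j : m, (∑ k, x k • M k) i j * (∑ l, y l • N l) i j
      = ∑ k, ∑ l, x k * y l * (M k i j * N l i j) := by
    intro i j
    rw [matrix_sum_smul_apply, matrix_sum_smul_apply, Finset.sum_mul_sum]
    apply Finset.sum_congr rfl; intro k _
    apply Finset.sum_congr rfl; intro l _
    ring
  calc ∑ i, ∑ j, (∑ k, x k • M k) i j * (∑ l, y l • N l) i j
      = ∑ i, ∑ j, ∑ k, ∑ l, x k * y l * (M k i j * N l i j) :=
        Finset.sum_congr rfl fun i _ => Finset.sum_congr rfl fun j _ => e1 i j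
    _ = ∑ k, ∑ l, ∑ i, ∑ j, x k * y l * (M k i j * N l i j) := sum4_swap _
    _ = ∑ k, ∑ l, x k * y l * ∑ i, ∑ j, M k i j * N l i j := by
        apply Finset.sum_congr rfl; intro k _
        apply Finset.sum_congr rfl; intro l _
        rw [Finset.mul_sum]
        apply Finset.sum_congr rfl; intro i _
        rw [Finset.mul_sum]

lemma mul_sum_smul {m κ κ' : Type*} [Fintype m] [DecidableEq m] [Fintype κ] [Fintype κ']
    (x : κ → ℝ) (y : κ' → ℝ) (M : κ → Matrix m m ℝ) (N : κ' → Matrix m m ℝ) :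
    (∑ k, x k • M k) * (∑ l, y l • N l) = ∑ k, ∑ l, (x k * y l) • (M k * N l) := by
  rw [Finset.sum_mul]
  apply Finset.sum_congr rfl; intro k _
  rw [Finset.mul_sum]
  apply Finset.sum_congr rfl; intro l _
  rw [smul_mul_assoc, mul_smul_comm, smul_smul]


/-- Key lemma: for a pairwise-orthogonal family of symmetric matrices `B i` with
squared norms bounded by `c`, the total commutator energy against a symmetric `A`
is at most `‖A‖² (∑ ‖B i‖² + c)`. -/
lemma comm_sum_bound {n : ℕ} {ι : Type*} (sF : Finset ι)
    (A : Matrix (Fin n) (Fin n) ℝ) (hA : A.IsSymm)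
    (B : ι → Matrix (Fin n) (Fin n) ℝ) (hB : ∀ i ∈ sF, (B i).IsSymm)
    (horth : ∀ i ∈ sF, ∀ j ∈ sF, i ≠ j → ip (B i) (B j) = 0)
    (c : ℝ) (hc0 : 0 ≤ c) (hc : ∀ i ∈ sF, ip (B i) (B i) ≤ c) :
    ∑ i ∈ sF, ip (A * B i - B i * A) (A * B i - B i * A)
      ≤ ip A A * ((∑ i ∈ sF, ip (B i) (B i)) + c) := by
  classical
  -- spectral decomposition of A
  have hH : A.IsHermitian := by
    rw [Matrix.IsHermitian, Matrix.conjTranspose_eq_transpose_of_trivial]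
    exact hA
  set U : Matrix (Fin n) (Fin n) ℝ := (hH.eigenvectorUnitary : Matrix (Fin n) (Fin n) ℝ) with hU
  set μ : Fin n → ℝ := hH.eigenvalues with hμ
  have h1 : U * Uᵀ = 1 := by
    have := (Matrix.mem_unitaryGroup_iff).mp hH.eigenvectorUnitary.2
    rwa [Matrix.star_eq_conjTranspose, Matrix.conjTranspose_eq_transpose_of_trivial] at this
  have h2 : Uᵀ * U = 1 := by
    have := (Matrix.mem_unitaryGroup_iff').mp hH.eigenvectorUnitary.2
    rwa [Matrix.star_eq_conjTranspose, Matrix.conjTranspose_eq_transpose_of_trivial] at this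
  set Q : Matrix (Fin n) (Fin n) ℝ := Uᵀ with hQ
  have hQ1 : Qᵀ * Q = 1 := by rw [hQ, Matrix.transpose_transpose]; exact h1
  have hQ2 : Q * Qᵀ = 1 := by rw [hQ, Matrix.transpose_transpose]; exact h2
  have hDdiag : Q * A * Qᵀ = Matrix.diagonal μ := by
    have := hH.conjStarAlgAut_star_eigenvectorUnitary
    simp only [Unitary.conjStarAlgAut_apply, Unitary.coe_star, star_star] at this
    rw [Matrix.star_eq_conjTranspose, Matrix.conjTranspose_eq_transpose_of_trivial] at this
    rw [hQ, Matrix.transpose_transpose, this]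
    congr 1
  set B' : ι → Matrix (Fin n) (Fin n) ℝ := fun i => Q * B i * Qᵀ with hB'
  have hB'symm : ∀ i ∈ sF, ∀ s t, B' i s t = B' i t s := by
    intro i hi s t
    have : (B' i)ᵀ = B' i := by
      rw [hB']
      simp only [Matrix.transpose_mul, Matrix.transpose_transpose]
      rw [(hB i hi : (B i)ᵀ = B i)]
      rw [Matrix.mul_assoc]
    calc B' i s t = (B' i)ᵀ t s := rfl
      _ = B' i t s := by rw [this]
  have hipB' : ∀ i j, ip (B' i) (B' j) = ip (B i) (B j) := fun i j => ip_conj Q _ _ hQ1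
  -- each commutator energy in the eigenbasis
  have hcomm : ∀ i, ip (A * B i - B i * A) (A * B i - B i * A)
      = ∑ s, ∑ t, (μ s - μ t)^2 * (B' i s t)^2 := by
    intro i
    rw [← ip_diag_comm μ (B' i), ← hDdiag]
    rw [← conj_comm_sub Q A (B i) hQ1]
    rw [ip_conj Q _ _ hQ1]
  -- total weights
  set W : Fin n → Fin n → ℝ := fun s t => ∑ i ∈ sF, (B' i s t)^2 with hW
  have hW0 : ∀ s t, 0 ≤ W s t := fun s t => Finset.sum_nonneg fun i _ => sq_nonneg _
  have hWsym : ∀ s t, W s t = W t s := by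
    intro s t
    apply Finset.sum_congr rfl
    intro i hi
    rw [hB'symm i hi s t]
  have hWtot : ∑ s, ∑ t, W s t = ∑ i ∈ sF, ip (B i) (B i) := by
    calc ∑ s, ∑ t, W s t
        = ∑ s, ∑ i ∈ sF, ∑ t, (B' i s t)^2 := by
          apply Finset.sum_congr rfl; intro s _
          exact Finset.sum_comm
      _ = ∑ i ∈ sF, ∑ s, ∑ t, (B' i s t)^2 := Finset.sum_comm
      _ = ∑ i ∈ sF, ip (B' i) (B' i) := by
          apply Finset.sum_congr rfl; intro i _
          unfold ip
          apply Finset.sum_congr rfl; intro s _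
          apply Finset.sum_congr rfl; intro t _
          ring
      _ = ∑ i ∈ sF, ip (B i) (B i) := Finset.sum_congr rfl fun i _ => hipB' i i
  -- Bessel: off-diagonal weight cap
  have hWcap : ∀ s t, s ≠ t → W s t ≤ c / 2 := by
    intro s t hst
    have hb := bessel (κ := Fin n × Fin n) sF (fun i q => B' i q.1 q.2)
      (fun q => (if q = (s, t) then 1 else 0) + (if q = (t, s) then 1 else 0))
      (by
        intro i hi j hj hij
        have : ∑ x : Fin n × Fin n, B' i x.1 x.2 * B' j x.1 x.2 = ip (B' i) (B' j) := by
          rw [Fintype.sum_prod_type]; rfl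
        rw [this, hipB', horth i hi j hj hij])
      c hc0
      (by
        intro i hi
        have : ∑ x : Fin n × Fin n, B' i x.1 x.2 * B' i x.1 x.2 = ip (B' i) (B' i) := by
          rw [Fintype.sum_prod_type]; rfl
        rw [this, hipB']
        exact hc i hi)
    have hpt : ∀ i ∈ sF, (∑ x : Fin n × Fin n, B' i x.1 x.2 *
        ((if x = (s, t) then 1 else 0) + (if x = (t, s) then 1 else 0))) = 2 * B' i s t := by
      intro i hi
      have : ∀ x : Fin n × Fin n, B' i x.1 x.2 *
          ((if x = (s, t) then 1 else 0) + (if x = (t, s) then 1 else 0))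
          = (if x = (s, t) then B' i s t else 0) + (if x = (t, s) then B' i t s else 0) := by
        intro x
        by_cases h1 : x = (s, t)
        · subst h1
          have h2 : ((s, t) : Fin n × Fin n) ≠ (t, s) := by
            simp [Prod.ext_iff]; intro h; exact fun _ => (hst h).elim
          simp [h2]
        · by_cases h3 : x = (t, s)
          · subst h3
            simp [h1]
          · simp [h1, h3]
      rw [Finset.sum_congr rfl fun x _ => this x, Finset.sum_add_distrib,
        hB'symm i hi t s]
      simp only [Finset.sum_ite_eq' univ, Finset.mem_univ, if_true]
      ring
    have hee : (∑ x : Fin n × Fin n,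
        ((if x = (s, t) then (1:ℝ) else 0) + (if x = (t, s) then 1 else 0)) *
        ((if x = (s, t) then 1 else 0) + (if x = (t, s) then 1 else 0))) = 2 := by
      have hne : ((s, t) : Fin n × Fin n) ≠ (t, s) := by
        simp [Prod.ext_iff]; intro h; exact fun _ => (hst h).elim
      have : ∀ x : Fin n × Fin n,
          ((if x = (s, t) then (1:ℝ) else 0) + (if x = (t, s) then 1 else 0)) *
          ((if x = (s, t) then 1 else 0) + (if x = (t, s) then 1 else 0))
          = (if x = (s, t) then 1 else 0) + (if x = (t, s) then 1 else 0) := by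
        intro x
        by_cases h1 : x = (s, t)
        · subst h1; simp [hne]
        · by_cases h3 : x = (t, s)
          · subst h3; simp [h1]
          · simp [h1, h3]
      rw [Finset.sum_congr rfl fun x _ => this x, Finset.sum_add_distrib]
      simp only [Finset.sum_ite_eq' univ, Finset.mem_univ, if_true]
      norm_num
    beta_reduce at hb
    rw [hee] at hb
    have hpt2 : ∀ i ∈ sF, (∑ x : Fin n × Fin n, B' i x.1 x.2 *
        ((if x = (s, t) then (1:ℝ) else 0) + (if x = (t, s) then 1 else 0))) ^ 2
        = (2 * B' i s t)^2 := fun i hi => by rw [hpt i hi]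
    rw [Finset.sum_congr rfl hpt2] at hb
    have h4W : ∑ i ∈ sF, (2 * B' i s t)^2 = 4 * W s t := by
      rw [hW]
      simp only
      rw [Finset.mul_sum]
      apply Finset.sum_congr rfl; intros; ring
    rw [h4W] at hb
    linarith
  -- now conclude
  have hAA : ip A A = ∑ s, μ s ^2 := by
    rw [← ip_diag_self μ, ← hDdiag, ip_conj Q _ _ hQ1]
  by_cases hcz : c = 0
  · -- all B i vanish
    have hBz : ∀ i ∈ sF, B i = 0 := by
      intro i hi
      apply ip_self_eq_zero
      have := hc i hi
      have := ip_self_nonneg (B i)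
      linarith [hcz ▸ hc i hi]
    have hL : ∑ i ∈ sF, ip (A * B i - B i * A) (A * B i - B i * A) = 0 := by
      apply Finset.sum_eq_zero
      intro i hi
      rw [hBz i hi]
      simp only [Matrix.mul_zero, Matrix.zero_mul, sub_zero]
      unfold ip
      simp
    have hR : ∑ i ∈ sF, ip (B i) (B i) = 0 := by
      apply Finset.sum_eq_zero
      intro i hi
      rw [hBz i hi]
      unfold ip; simp
    rw [hL, hR, hcz]
    simp
  · have hcpos : 0 < c := lt_of_le_of_ne hc0 (Ne.symm hcz)
    set cc : Fin n → Fin n → ℝ := fun s t => if s = t then 0 else W s t / c with hcc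
    have hccsym : ∀ s t, cc s t = cc t s := by
      intro s t
      rw [hcc]
      simp only
      by_cases h : s = t
      · subst h; simp
      · rw [if_neg h, if_neg (Ne.symm h), hWsym]
    have hcc0 : ∀ s t, 0 ≤ cc s t := by
      intro s t
      rw [hcc]
      simp only
      by_cases h : s = t
      · simp [h]
      · rw [if_neg h]
        exact div_nonneg (hW0 s t) hc0
    have hccdiag : ∀ s, cc s s = 0 := by intro s; rw [hcc]; simp
    have hcccap : ∀ s t, s ≠ t → cc s t ≤ 1/2 := by
      intro s t h
      rw [hcc]
      simp only [if_neg h]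
      rw [div_le_iff₀ hcpos]
      have := hWcap s t h
      linarith
    have hgb := graph_bound μ cc hccsym hcc0 hccdiag hcccap
    have hLHS : ∑ i ∈ sF, ip (A * B i - B i * A) (A * B i - B i * A)
        = c * ∑ s, ∑ t, cc s t * (μ s - μ t)^2 := by
      calc ∑ i ∈ sF, ip (A * B i - B i * A) (A * B i - B i * A)
          = ∑ i ∈ sF, ∑ s, ∑ t, (μ s - μ t)^2 * (B' i s t)^2 :=
            Finset.sum_congr rfl fun i _ => hcomm i
        _ = ∑ s, ∑ i ∈ sF, ∑ t, (μ s - μ t)^2 * (B' i s t)^2 := Finset.sum_comm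
        _ = ∑ s, ∑ t, (μ s - μ t)^2 * W s t := by
            apply Finset.sum_congr rfl; intro s _
            rw [Finset.sum_comm]
            apply Finset.sum_congr rfl; intro t _
            rw [hW]
            simp only
            rw [Finset.mul_sum]
        _ = c * ∑ s, ∑ t, cc s t * (μ s - μ t)^2 := by
            rw [Finset.mul_sum]
            apply Finset.sum_congr rfl; intro s _
            rw [Finset.mul_sum]
            apply Finset.sum_congr rfl; intro t _
            rw [hcc]
            simp only
            by_cases h : s = t
            · subst h; simp
            · rw [if_neg h]
              field_simp
    have hccsum : (∑ s, ∑ t, cc s t) ≤ (∑ i ∈ sF, ip (B i) (B i)) / c := by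
      rw [← hWtot, Finset.sum_div]
      apply Finset.sum_le_sum
      intro s _
      rw [Finset.sum_div]
      apply Finset.sum_le_sum
      intro t _
      rw [hcc]
      simp only
      by_cases h : s = t
      · rw [if_pos h]
        exact div_nonneg (hW0 s t) hc0
      · rw [if_neg h]
    have hμ2 : (0:ℝ) ≤ ∑ s, μ s ^2 := Finset.sum_nonneg fun s _ => sq_nonneg _
    set b : ℝ := ∑ i ∈ sF, ip (B i) (B i) with hbdef
    have hb0 : 0 ≤ b := Finset.sum_nonneg fun i _ => ip_self_nonneg _
    calc ∑ i ∈ sF, ip (A * B i - B i * A) (A * B i - B i * A)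
        = c * ∑ s, ∑ t, cc s t * (μ s - μ t)^2 := hLHS
      _ ≤ c * (((∑ s, ∑ t, cc s t) + 1) * ∑ s, μ s ^2) :=
          mul_le_mul_of_nonneg_left hgb hc0
      _ ≤ c * ((b / c + 1) * ∑ s, μ s ^2) := by
          apply mul_le_mul_of_nonneg_left _ hc0
          apply mul_le_mul_of_nonneg_right _ hμ2
          linarith [hccsum]
      _ = (b + c) * ∑ s, μ s ^2 := by
          field_simp
      _ = ip A A * (b + c) := by rw [hAA]; ring

theorem li_li_ip (p n : ℕ) (hp : 2 ≤ p)
    (A : Fin p → Matrix (Fin n) (Fin n) ℝ)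
    (hA : ∀ α, (A α).IsSymm) :
    (∑ α : Fin p, ∑ β : Fin p, ip (A α * A β - A β * A α) (A α * A β - A β * A α))
      + ∑ α : Fin p, ∑ β : Fin p, (ip (A α) (A β)) ^ 2
      ≤ (3 / 2) * (∑ α : Fin p, ip (A α) (A α)) ^ 2 := by
  classical
  -- Gram matrix and its diagonalization
  set GM : Matrix (Fin p) (Fin p) ℝ := Matrix.of (fun α β => ip (A α) (A β)) with hGM
  have hGMsymm : GM.IsHermitian := by
    rw [Matrix.IsHermitian, Matrix.conjTranspose_eq_transpose_of_trivial]
    ext α β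
    simp [hGM, Matrix.transpose_apply, ip_comm]
  set V : Matrix (Fin p) (Fin p) ℝ := (hGMsymm.eigenvectorUnitary : Matrix (Fin p) (Fin p) ℝ)
    with hV
  have hV1 : V * Vᵀ = 1 := by
    have := (Matrix.mem_unitaryGroup_iff).mp hGMsymm.eigenvectorUnitary.2
    rwa [Matrix.star_eq_conjTranspose, Matrix.conjTranspose_eq_transpose_of_trivial] at this
  have hV2 : Vᵀ * V = 1 := by
    have := (Matrix.mem_unitaryGroup_iff').mp hGMsymm.eigenvectorUnitary.2
    rwa [Matrix.star_eq_conjTranspose, Matrix.conjTranspose_eq_transpose_of_trivial] at this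
  have hdg : Vᵀ * GM * V = Matrix.diagonal hGMsymm.eigenvalues := by
    have := hGMsymm.conjStarAlgAut_star_eigenvectorUnitary
    simp only [Unitary.conjStarAlgAut_apply, Unitary.coe_star, star_star] at this
    rw [Matrix.star_eq_conjTranspose, Matrix.conjTranspose_eq_transpose_of_trivial] at this
    rw [this]
    congr 1
  have hVrow : ∀ a b, (∑ γ, V a γ * V b γ) = if a = b then (1:ℝ) else 0 := by
    intro a b
    have := congrFun (congrFun hV1 a) b
    rw [Matrix.mul_apply] at this
    simp only [Matrix.transpose_apply] at this
    rw [this, Matrix.one_apply]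
  -- the rotated family
  set A' : Fin p → Matrix (Fin n) (Fin n) ℝ := fun γ => ∑ α, V α γ • A α with hA'
  have hA'symm : ∀ γ, (A' γ).IsSymm := by
    intro γ
    rw [Matrix.IsSymm]
    ext i j
    rw [Matrix.transpose_apply]
    show (∑ α, V α γ • A α) j i = (∑ α, V α γ • A α) i j
    rw [matrix_sum_smul_apply, matrix_sum_smul_apply]
    exact Finset.sum_congr rfl fun α _ => by rw [(hA α).apply i j]
  have hipA' : ∀ γ δ, ip (A' γ) (A' δ) = (Vᵀ * GM * V) γ δ := by
    intro γ δ
    show ip (∑ α, V α γ • A α) (∑ β, V β δ • A β) = _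
    rw [ip_sum_smul, Matrix.mul_apply]
    have e1 : ∀ β, (Vᵀ * GM) γ β = ∑ α, V α γ * ip (A α) (A β) := by
      intro β
      rw [Matrix.mul_apply]
      apply Finset.sum_congr rfl; intro α _
      rw [Matrix.transpose_apply]
      rfl
    calc ∑ α, ∑ β, V α γ * V β δ * ip (A α) (A β)
        = ∑ β, ∑ α, V α γ * V β δ * ip (A α) (A β) := Finset.sum_comm
      _ = ∑ β, (∑ α, V α γ * ip (A α) (A β)) * V β δ := by
          apply Finset.sum_congr rfl; intro β _
          rw [Finset.sum_mul]
          apply Finset.sum_congr rfl; intro α _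
          ring
      _ = ∑ β, (Vᵀ * GM) γ β * V β δ := by
          apply Finset.sum_congr rfl; intro β _
          rw [e1]
  have horth' : ∀ γ δ, γ ≠ δ → ip (A' γ) (A' δ) = 0 := by
    intro γ δ hγδ
    rw [hipA', hdg, Matrix.diagonal_apply_ne _ hγδ]
  -- transfer of the three quantities
  have hT3 : ∑ γ, ip (A' γ) (A' γ) = ∑ α, ip (A α) (A α) := by
    calc ∑ γ, ip (A' γ) (A' γ) = ∑ γ, (Vᵀ * GM * V) γ γ :=
          Finset.sum_congr rfl fun γ _ => hipA' γ γ
      _ = Matrix.trace (Vᵀ * GM * V) := by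
          rw [Matrix.trace]
          apply Finset.sum_congr rfl; intros; rw [Matrix.diag_apply]
      _ = Matrix.trace GM := by
          rw [Matrix.trace_mul_comm, ← Matrix.mul_assoc, hV1, Matrix.one_mul]
      _ = ∑ α, ip (A α) (A α) := by
          rw [Matrix.trace]
          apply Finset.sum_congr rfl; intros; rw [Matrix.diag_apply]; rfl
  have hT2 : ∑ γ, ∑ δ, (ip (A' γ) (A' δ))^2 = ∑ α, ∑ β, (ip (A α) (A β))^2 := by
    have hQtr : (Vᵀ)ᵀ = V := Matrix.transpose_transpose V
    have hQ1 : (Vᵀ)ᵀ * Vᵀ = 1 := by rw [hQtr]; exact hV1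
    calc ∑ γ, ∑ δ, (ip (A' γ) (A' δ))^2
        = ∑ γ, ∑ δ, ((Vᵀ * GM * (Vᵀ)ᵀ) γ δ)^2 := by
          apply Finset.sum_congr rfl; intro γ _
          apply Finset.sum_congr rfl; intro δ _
          rw [hipA', hQtr]
      _ = ip (Vᵀ * GM * (Vᵀ)ᵀ) (Vᵀ * GM * (Vᵀ)ᵀ) := by
          unfold ip
          apply Finset.sum_congr rfl; intro γ _
          apply Finset.sum_congr rfl; intro δ _
          ring
      _ = ip GM GM := ip_conj (Vᵀ) GM GM hQ1
      _ = ∑ α, ∑ β, (ip (A α) (A β))^2 := by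
          show ∑ α, ∑ β, GM α β * GM α β = _
          apply Finset.sum_congr rfl; intro α _
          apply Finset.sum_congr rfl; intro β _
          rw [sq]
          rfl
  -- commutators of the rotated family
  have hKdef : ∀ γ δ, A' γ * A' δ - A' δ * A' γ
      = ∑ q : Fin p × Fin p, (V q.1 γ * V q.2 δ) • (A q.1 * A q.2 - A q.2 * A q.1) := by
    intro γ δ
    have e1 : A' γ * A' δ = ∑ α, ∑ β, (V α γ * V β δ) • (A α * A β) := mul_sum_smul _ _ _ _
    have e2 : A' δ * A' γ = ∑ α, ∑ β, (V α γ * V β δ) • (A β * A α) := by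
      calc A' δ * A' γ = ∑ α, ∑ β, (V α δ * V β γ) • (A α * A β) := mul_sum_smul _ _ _ _
        _ = ∑ β, ∑ α, (V β δ * V α γ) • (A β * A α) := by rw [Finset.sum_comm]
        _ = ∑ α, ∑ β, (V α γ * V β δ) • (A β * A α) := by
            rw [Finset.sum_comm]
            apply Finset.sum_congr rfl; intro α _
            apply Finset.sum_congr rfl; intro β _
            rw [mul_comm]
    rw [e1, e2, ← Finset.sum_sub_distrib]
    rw [Fintype.sum_prod_type]
    apply Finset.sum_congr rfl; intro α _
    rw [← Finset.sum_sub_distrib]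
    apply Finset.sum_congr rfl; intro β _
    rw [← smul_sub]
  have hT1 : ∑ γ, ∑ δ, ip (A' γ * A' δ - A' δ * A' γ) (A' γ * A' δ - A' δ * A' γ)
      = ∑ α, ∑ β, ip (A α * A β - A β * A α) (A α * A β - A β * A α) := by
    set K : Fin p × Fin p → Matrix (Fin n) (Fin n) ℝ :=
      fun q => A q.1 * A q.2 - A q.2 * A q.1 with hK
    have e1 : ∀ γ δ, ip (A' γ * A' δ - A' δ * A' γ) (A' γ * A' δ - A' δ * A' γ)
        = ∑ q : Fin p × Fin p, ∑ q' : Fin p × Fin p,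
            (V q.1 γ * V q.2 δ) * (V q'.1 γ * V q'.2 δ) * ip (K q) (K q') := by
      intro γ δ
      rw [hKdef γ δ]
      exact ip_sum_smul _ _ _ _
    calc ∑ γ, ∑ δ, ip (A' γ * A' δ - A' δ * A' γ) (A' γ * A' δ - A' δ * A' γ)
        = ∑ γ, ∑ δ, ∑ q : Fin p × Fin p, ∑ q' : Fin p × Fin p,
            (V q.1 γ * V q.2 δ) * (V q'.1 γ * V q'.2 δ) * ip (K q) (K q') :=
          Finset.sum_congr rfl fun γ _ => Finset.sum_congr rfl fun δ _ => e1 γ δ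
      _ = ∑ q : Fin p × Fin p, ∑ q' : Fin p × Fin p, ∑ γ, ∑ δ,
            (V q.1 γ * V q.2 δ) * (V q'.1 γ * V q'.2 δ) * ip (K q) (K q') := sum4_swap _
      _ = ∑ q : Fin p × Fin p, ∑ q' : Fin p × Fin p,
            (if q.1 = q'.1 then (1:ℝ) else 0) * ((if q.2 = q'.2 then (1:ℝ) else 0)
              * ip (K q) (K q')) := by
          apply Finset.sum_congr rfl; intro q _
          apply Finset.sum_congr rfl; intro q' _
          have e2 : ∀ γ δ, (V q.1 γ * V q.2 δ) * (V q'.1 γ * V q'.2 δ) * ip (K q) (K q')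
              = (V q.1 γ * V q'.1 γ) * ((V q.2 δ * V q'.2 δ) * ip (K q) (K q')) := by
            intro γ δ; ring
          rw [Finset.sum_congr rfl fun γ _ => Finset.sum_congr rfl fun δ _ => e2 γ δ]
          have e3 : ∀ γ, ∑ δ, (V q.1 γ * V q'.1 γ) * ((V q.2 δ * V q'.2 δ) * ip (K q) (K q'))
              = (V q.1 γ * V q'.1 γ) * ((∑ δ, V q.2 δ * V q'.2 δ) * ip (K q) (K q')) := by
            intro γ
            rw [← Finset.mul_sum, Finset.sum_mul]
          rw [Finset.sum_congr rfl fun γ _ => e3 γ, ← Finset.sum_mul, hVrow, hVrow]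
      _ = ∑ q : Fin p × Fin p, ip (K q) (K q) := by
          apply Finset.sum_congr rfl; intro q _
          rw [Fintype.sum_prod_type]
          simp only [ite_mul, one_mul, zero_mul, mul_ite, mul_one, mul_zero]
          simp only [Finset.sum_ite_eq, Finset.mem_univ, if_true]
      _ = ∑ α, ∑ β, ip (A α * A β - A β * A α) (A α * A β - A β * A α) := by
          rw [Fintype.sum_prod_type]
  -- reduce to the rotated, pairwise-orthogonal family
  rw [← hT1, ← hT2, ← hT3]
  set lam : Fin p → ℝ := fun γ => ip (A' γ) (A' γ) with hlam
  have hlam0 : ∀ γ, 0 ≤ lam γ := fun γ => ip_self_nonneg _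
  set S : ℝ := ∑ γ, lam γ with hS
  have hsq : ∑ γ, ∑ δ, (ip (A' γ) (A' δ))^2 = ∑ γ, (lam γ)^2 := by
    apply Finset.sum_congr rfl; intro γ _
    rw [Finset.sum_eq_single_of_mem γ (mem_univ γ)
      (fun δ _ hδγ => by rw [horth' γ δ (Ne.symm hδγ)]; simp)]
  have hdiagcomm : ∀ γ, ip (A' γ * A' γ - A' γ * A' γ) (A' γ * A' γ - A' γ * A' γ) = 0 := by
    intro γ; rw [sub_self]; unfold ip; simp
  have hne : (univ : Finset (Fin p)).Nonempty := ⟨⟨0, by omega⟩, mem_univ _⟩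
  obtain ⟨a1, -, ha1⟩ := Finset.exists_max_image (univ : Finset (Fin p)) lam hne
  have hntv : ∃ x : Fin p, x ≠ a1 := by
    by_cases h : a1 = ⟨0, by omega⟩
    · refine ⟨⟨1, by omega⟩, ?_⟩
      rw [h]
      simp [Fin.ext_iff]
    · exact ⟨⟨0, by omega⟩, fun hx => h hx.symm⟩
  obtain ⟨x0, hx0⟩ := hntv
  have herase_ne : (univ.erase a1).Nonempty := ⟨x0, Finset.mem_erase.mpr ⟨hx0, mem_univ x0⟩⟩
  obtain ⟨a2, ha2mem, ha2⟩ := Finset.exists_max_image (univ.erase a1) lam herase_ne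
  have ha2ne : a2 ≠ a1 := (Finset.mem_erase.mp ha2mem).1
  have hxy : lam a2 ≤ lam a1 := ha1 a2 (mem_univ a2)
  have hpairle : lam a1 + lam a2 ≤ S := by
    rw [hS]
    have hp2 : ∑ γ ∈ ({a1, a2} : Finset (Fin p)), lam γ = lam a1 + lam a2 :=
      Finset.sum_pair (Ne.symm ha2ne)
    rw [← hp2]
    exact Finset.sum_le_sum_of_subset_of_nonneg (Finset.subset_univ _) fun γ _ _ => hlam0 γ
  have hsum_erase : ∀ γ : Fin p, ∑ δ ∈ univ.erase γ, lam δ = S - lam γ := by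
    intro γ
    have h := Finset.add_sum_erase univ lam (mem_univ γ)
    rw [hS]
    linarith
  have hper : ∀ γ : Fin p,
      ∑ δ ∈ univ.erase γ, ip (A' γ * A' δ - A' δ * A' γ) (A' γ * A' δ - A' δ * A' γ)
        ≤ lam γ * ((S - lam γ) + lam (if γ = a1 then a2 else a1)) := by
    intro γ
    have hc : ∀ δ ∈ univ.erase γ, ip (A' δ) (A' δ) ≤ lam (if γ = a1 then a2 else a1) := by
      intro δ hδ
      by_cases hγ : γ = a1
      · rw [if_pos hγ]
        exact ha2 δ (hγ ▸ hδ)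
      · rw [if_neg hγ]
        exact ha1 δ (mem_univ δ)
    have hbnd := comm_sum_bound (univ.erase γ) (A' γ) (hA'symm γ) A'
      (fun δ _ => hA'symm δ)
      (fun i _ j _ hij => horth' i j hij)
      (lam (if γ = a1 then a2 else a1)) (hlam0 _) hc
    calc ∑ δ ∈ univ.erase γ, ip (A' γ * A' δ - A' δ * A' γ) (A' γ * A' δ - A' δ * A' γ)
        ≤ ip (A' γ) (A' γ) * ((∑ δ ∈ univ.erase γ, ip (A' δ) (A' δ))
            + lam (if γ = a1 then a2 else a1)) := hbnd
      _ = lam γ * ((S - lam γ) + lam (if γ = a1 then a2 else a1)) := by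
          rw [show (∑ δ ∈ univ.erase γ, ip (A' δ) (A' δ)) = ∑ δ ∈ univ.erase γ, lam δ from rfl,
            hsum_erase γ]
  have hcommtot : ∑ γ, ∑ δ, ip (A' γ * A' δ - A' δ * A' γ) (A' γ * A' δ - A' δ * A' γ)
      ≤ ∑ γ, lam γ * ((S - lam γ) + lam (if γ = a1 then a2 else a1)) := by
    apply Finset.sum_le_sum
    intro γ _
    have hsplit : ∑ δ, ip (A' γ * A' δ - A' δ * A' γ) (A' γ * A' δ - A' δ * A' γ)
        = ∑ δ ∈ univ.erase γ, ip (A' γ * A' δ - A' δ * A' γ) (A' γ * A' δ - A' δ * A' γ) := by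
      rw [← Finset.add_sum_erase univ _ (mem_univ γ), hdiagcomm γ, zero_add]
    rw [hsplit]
    exact hper γ
  have hpick : ∑ γ, lam γ * lam (if γ = a1 then a2 else a1)
      = lam a1 * lam a2 + ∑ γ ∈ univ.erase a1, lam γ * lam a1 := by
    rw [← Finset.add_sum_erase univ _ (mem_univ a1)]
    congr 1
    · rw [if_pos rfl]
    · apply Finset.sum_congr rfl
      intro γ hγ
      rw [if_neg (Finset.mem_erase.mp hγ).1]
  have herase_a1 : ∑ γ ∈ univ.erase a1, lam γ * lam a1 = (S - lam a1) * lam a1 := by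
    rw [← Finset.sum_mul, hsum_erase a1]
  have e1 : ∑ γ, lam γ * ((S - lam γ) + lam (if γ = a1 then a2 else a1))
      = ∑ γ, lam γ * (S - lam γ) + ∑ γ, lam γ * lam (if γ = a1 then a2 else a1) := by
    rw [← Finset.sum_add_distrib]
    apply Finset.sum_congr rfl; intros; ring
  have e2 : ∑ γ, lam γ * (S - lam γ) + ∑ γ, (lam γ)^2 = S^2 := by
    rw [← Finset.sum_add_distrib]
    have h : ∀ γ ∈ (univ : Finset (Fin p)), lam γ * (S - lam γ) + (lam γ)^2 = lam γ * S :=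
      fun γ _ => by ring
    rw [Finset.sum_congr rfl h, ← Finset.sum_mul, ← hS]
    ring
  calc (∑ γ, ∑ δ, ip (A' γ * A' δ - A' δ * A' γ) (A' γ * A' δ - A' δ * A' γ))
        + ∑ γ, ∑ δ, (ip (A' γ) (A' δ))^2
      ≤ (∑ γ, lam γ * ((S - lam γ) + lam (if γ = a1 then a2 else a1))) + ∑ γ, (lam γ)^2 := by
        rw [hsq]
        exact add_le_add_left hcommtot _
    _ = (∑ γ, lam γ * (S - lam γ) + ∑ γ, (lam γ)^2) + ∑ γ, lam γ * lam (if γ = a1 then a2 else a1) := by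
        rw [e1]; ring
    _ = S^2 + (lam a1 * lam a2 + (S - lam a1) * lam a1) := by
        rw [e2, hpick, herase_a1]
    _ ≤ (3/2) * S^2 := by
        nlinarith [sq_nonneg (lam a1 - lam a2), sq_nonneg (S - lam a1 - lam a2),
          mul_nonneg (hlam0 a2) (by linarith : (0:ℝ) ≤ S - lam a1 - lam a2)]


end LiLiAux

open Matrix BigOperators

/-- Li–Li algebraic inequality: for symmetric real `n × n` matrices `A 1, …, A p`
(`p ≥ 2`, `n ≥ 1`), with `S α β = tr (A α * A β)` and `S = ∑ α, tr (A α * A α)`,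
one has `∑ α β, ‖[A α, A β]‖² + ∑ α β, (S α β)² ≤ (3/2) * S²`. -/
theorem li_li_inequality (p n : ℕ) (hp : 2 ≤ p) (hn : 1 ≤ n)
    (A : Fin p → Matrix (Fin n) (Fin n) ℝ)
    (hA : ∀ α, (A α).IsSymm) :
    (∑ α : Fin p, ∑ β : Fin p, ∑ i : Fin n, ∑ j : Fin n,
        ((A α * A β - A β * A α) i j) ^ 2)
      + ∑ α : Fin p, ∑ β : Fin p, (Matrix.trace (A α * A β)) ^ 2
      ≤ (3 / 2) * (∑ α : Fin p, Matrix.trace (A α * A α)) ^ 2 := by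
  have e1 : ∑ α : Fin p, ∑ β : Fin p, ∑ i : Fin n, ∑ j : Fin n,
      ((A α * A β - A β * A α) i j) ^ 2
      = ∑ α : Fin p, ∑ β : Fin p,
          LiLiAux.ip (A α * A β - A β * A α) (A α * A β - A β * A α) := by
    apply Finset.sum_congr rfl; intro α _
    apply Finset.sum_congr rfl; intro β _
    unfold LiLiAux.ip
    apply Finset.sum_congr rfl; intro i _
    apply Finset.sum_congr rfl; intro j _
    ring
  have e2 : ∑ α : Fin p, ∑ β : Fin p, (Matrix.trace (A α * A β)) ^ 2
      = ∑ α : Fin p, ∑ β : Fin p, (LiLiAux.ip (A α) (A β)) ^ 2 := by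
    apply Finset.sum_congr rfl; intro α _
    apply Finset.sum_congr rfl; intro β _
    rw [LiLiAux.trace_mul_symm _ _ (hA β)]
  have e3 : ∑ α : Fin p, Matrix.trace (A α * A α)
      = ∑ α : Fin p, LiLiAux.ip (A α) (A α) := by
    apply Finset.sum_congr rfl; intro α _
    rw [LiLiAux.trace_mul_symm _ _ (hA α)]
  rw [e1, e2, e3]
  exact LiLiAux.li_li_ip p n hp A hA
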